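/- Let φ: C → C' be the isomorphism of the genus-2 curve C: Y² = F(X) to its complex conjugate curve C̄ given by (X̄, Ȳ) = ((-1 + √-3 + (3 - √-3)X)/(2√-3 + 6(1 - √-3)X), 24√-3·Y/(2√-3 + 6(1-√-3)X)³). Then the composition φ̄ ∘ φ equals the hyperelliptic involution w: (X,Y) ↦ (X,-Y). -/

import Mathlib

open Complex

/-- The Möbius transformation μ(X) = (-1 + √-3 + (3 - √-3)X)/(2√-3 + 6(1 - √-3)X),
where the root of -3 is a parameter. -/
noncomputable def mobius15 (s x : ℂ) : ℂ :=
  (-1 + s + (3 - s) * x) / (2 * s + 6 * (1 - s) * x)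

/-- The denominator q(X) = 2√-3 + 6(1 - √-3)X. -/
noncomputable def mobiusDen15 (s x : ℂ) : ℂ := 2 * s + 6 * (1 - s) * x

/-- the isomorphism φ: C → C̄, (X,Y) ↦ (μ(X), 24√-3·Y/q(X)³),
composed with its complex conjugate φ̄ (obtained by replacing √-3 by -√-3), is the
hyperelliptic involution (X,Y) ↦ (X,-Y): the conjugate Möbius map μ̄ inverts μ,
and the composed Y-coordinate factor is -1. -/
theorem conj_phi_comp_phi_eq_hyperelliptic_involution
    (s : ℂ) (hs : s ^ 2 = -3) (x y : ℂ)
    (hq : mobiusDen15 s x ≠ 0)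
    (hq' : mobiusDen15 (-s) (mobius15 s x) ≠ 0) :
    mobius15 (-s) (mobius15 s x) = x ∧
    24 * (-s) * (24 * s * y / (mobiusDen15 s x) ^ 3) /
        (mobiusDen15 (-s) (mobius15 s x)) ^ 3 = -y := by
  have hq0 : (2 * s + 6 * (1 - s) * x) ≠ 0 := hq
  have hnq : (-1 + s + (3 - s) * x) / (2 * s + 6 * (1 - s) * x) * (2 * s + 6 * (1 - s) * x)
      = (-1 + s + (3 - s) * x) := div_mul_cancel₀ _ hq0
  have hA : mobiusDen15 (-s) (mobius15 s x) * mobiusDen15 s x = -12 := by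
    simp only [mobiusDen15, mobius15]
    linear_combination (6 * (1 + s)) * hnq + (2 + 6 * x) * hs
  have hB : mobius15 (-s) (mobius15 s x) = x := by
    have hq1 : 2 * -s + 6 * (1 - -s) * mobius15 s x ≠ 0 := hq'
    rw [mobius15, div_eq_iff hq1]
    apply mul_right_cancel₀ hq0
    simp only [mobiusDen15, mobius15]
    linear_combination (3 + s - 6 * x * (1 + s)) * hnq + (-1 + 3 * x - 6 * x ^ 2) * hs
  refine ⟨hB, ?_⟩
  have h3 : (mobiusDen15 (-s) (mobius15 s x) * mobiusDen15 s x) ^ 3 = -1728 := by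
    rw [hA]; norm_num
  field_simp
  linear_combination (-576 * y) * hs + y * h3
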